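/- Let R be an almost Dedekind domain and I ⊆ J radical ideals. If I is invertible and D(J) is quasi-compact in the Zariski topology of Spec(R), then J is invertible. -/

import Mathlib

open nonZeroDivisors

def AlmostDedekind (R : Type*) [CommRing R] [IsDomain R] : Prop :=
  ∀ M : MaximalSpectrum R, IsDiscreteValuationRing (Localization.AtPrime M.asIdeal)

section Aux

variable {R : Type*} [CommRing R] [IsDomain R]

/-- In a domain whose localization at a maximal ideal `P` is a DVR, a nonzero radical
ideal `I ≤ P` localizes to the maximal ideal; in particular the localization of any
`J` with `I ≤ J ≤ P` is contained in the localization of `I`. -/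
lemma AlmostDedekind.loc_le (P : Ideal R) [P.IsMaximal]
    [IsDiscreteValuationRing (Localization.AtPrime P)]
    (I J : Ideal R) (hIrad : I.IsRadical) (hI0 : I ≠ ⊥) (hIJ : I ≤ J) (hJP : J ≤ P) :
    Ideal.map (algebraMap R (Localization.AtPrime P)) J ≤
      Ideal.map (algebraMap R (Localization.AtPrime P)) I := by
  set L := Localization.AtPrime P
  set f := algebraMap R L with hf
  have hinj : Function.Injective f := IsLocalization.injective L P.primeCompl_le_nonZeroDivisors
  obtain ⟨π, hπ⟩ := IsDiscreteValuationRing.exists_irreducible L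
  have hmax : IsLocalRing.maximalIdeal L = Ideal.span {π} :=
    (IsDiscreteValuationRing.irreducible_iff_uniformizer π).mp hπ
  have hmapP : Ideal.map f P = Ideal.span {π} := by
    rw [← hmax]; exact Localization.AtPrime.map_eq_maximalIdeal
  suffices hπI : π ∈ Ideal.map f I by
    calc Ideal.map f J ≤ Ideal.map f P := Ideal.map_mono hJP
      _ = Ideal.span {π} := hmapP
      _ ≤ Ideal.map f I := by
          rw [Ideal.span_le, Set.singleton_subset_iff]; exact hπI
  obtain ⟨b, hbI, hb0⟩ := (Submodule.ne_bot_iff I).mp hI0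
  have hfbP : f b ∈ IsLocalRing.maximalIdeal L := by
    rw [hmax, ← hmapP]
    exact Ideal.mem_map_of_mem f (hJP (hIJ hbI))
  have hfb0 : f b ≠ 0 := fun h => hb0 (hinj (by rw [h, map_zero]))
  obtain ⟨m, u, hu⟩ := IsDiscreteValuationRing.associated_pow_irreducible hfb0 hπ
  have hm0 : m ≠ 0 := by
    rintro rfl
    refine IsLocalRing.maximalIdeal.isMaximal L |>.ne_top ?_
    refine Ideal.eq_top_of_isUnit_mem _ hfbP ?_
    rw [pow_zero] at hu
    exact IsUnit.of_mul_eq_one _ hu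
  have hπm : π ^ m ∈ Ideal.map f I := by
    rw [← hu]; exact Ideal.mul_mem_right _ _ (Ideal.mem_map_of_mem f hbI)
  obtain ⟨⟨r, s⟩, hrs : IsLocalization.mk' L r s = π⟩ := IsLocalization.mk'_surjective P.primeCompl π
  have hrπ : f r = π * f s := by
    rw [← hrs, ← IsLocalization.mk'_spec L r s]
  have hrm : f (r ^ m) ∈ Ideal.map f I := by
    rw [map_pow, hrπ, mul_pow]
    exact Ideal.mul_mem_right _ _ hπm
  rw [IsLocalization.mem_map_algebraMap_iff P.primeCompl] at hrm
  obtain ⟨⟨⟨a, haI⟩, s'⟩, ha⟩ := hrm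
  have hra : r ^ m * (s' : R) = a := by
    apply hinj; rw [map_mul]; exact ha
  have hpow : (r * (s' : R)) ^ m ∈ I := by
    obtain ⟨k, rfl⟩ := Nat.exists_eq_succ_of_ne_zero hm0
    have : (r * (s' : R)) ^ (k + 1) = (r ^ (k + 1) * (s' : R)) * (s' : R) ^ k := by ring
    rw [this, hra]
    exact Ideal.mul_mem_right _ _ haI
  have hrs'I : r * (s' : R) ∈ I := hIrad ⟨m, hpow⟩
  have hmem : f (r * (s' : R)) ∈ Ideal.map f I := Ideal.mem_map_of_mem f hrs'I
  have hunit : IsUnit (f ((s : R) * (s' : R))) := by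
    have := IsLocalization.map_units L (s * s')
    simpa using this
  obtain ⟨v, hv⟩ := hunit
  have heq : π = (↑v⁻¹ : L) * f (r * (s' : R)) := by
    rw [map_mul, hrπ]
    rw [map_mul] at hv
    calc π = (↑v⁻¹ : L) * (↑v : L) * π := by rw [v.inv_mul, one_mul]
      _ = (↑v⁻¹ : L) * (π * f s * f (s' : R)) := by rw [hv]; ring
  rw [heq]
  exact Ideal.mul_mem_left _ _ hmem

/-- In a domain whose localization at a maximal ideal `P` is a DVR, a nonzero
finitely generated ideal has a "local generator with common denominator". -/
lemma AlmostDedekind.exists_local_gen (P : Ideal R) [P.IsMaximal]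
    [IsDiscreteValuationRing (Localization.AtPrime P)]
    (J : Ideal R) (hfg : J.FG) (hJ0 : J ≠ ⊥) :
    ∃ b₀ ∈ J, b₀ ≠ 0 ∧ ∃ s : P.primeCompl, ∀ a ∈ J, (s : R) * a ∈ Ideal.span {b₀} := by
  classical
  set L := Localization.AtPrime P
  set f := algebraMap R L with hf
  have hinj : Function.Injective f := IsLocalization.injective L P.primeCompl_le_nonZeroDivisors
  obtain ⟨T, hT⟩ := hfg
  obtain ⟨x, hx⟩ := (IsPrincipalIdealRing.principal (Ideal.map f J)).principal
  have hmapne : Ideal.map f J ≠ ⊥ := by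
    obtain ⟨b, hbJ, hb0⟩ := (Submodule.ne_bot_iff J).mp hJ0
    intro h
    apply hb0
    apply hinj
    rw [map_zero]
    have : f b ∈ Ideal.map f J := Ideal.mem_map_of_mem f hbJ
    rwa [h, Ideal.mem_bot] at this
  have hx0 : x ≠ 0 := by
    rintro rfl
    exact hmapne (hx.trans (Ideal.span_singleton_eq_bot.mpr rfl))
  -- for each generator b, f b = d b * x
  have hdex : ∀ b ∈ T, ∃ e : L, f b = e * x := by
    intro b hb
    have hm : f b ∈ Ideal.map f J := Ideal.mem_map_of_mem f (hT ▸ Ideal.subset_span hb)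
    rw [hx] at hm
    obtain ⟨e, he⟩ := Ideal.mem_span_singleton'.mp hm
    exact ⟨e, he.symm⟩
  choose! d hdspec using hdex
  -- some d b is a unit
  have hx_mem : x ∈ Ideal.span ((fun b => d b) '' (T : Set R)) * Ideal.span {x} := by
    have hxJ : x ∈ Ideal.map f J := hx ▸ Ideal.mem_span_singleton_self x
    have hmap : Ideal.map f J ≤ Ideal.span ((fun b => d b) '' (T : Set R)) * Ideal.span {x} := by
      rw [← hT, Ideal.map_span, Ideal.span_le]
      rintro _ ⟨b, hb, rfl⟩
      rw [hdspec b hb]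
      exact Ideal.mul_mem_mul (Ideal.subset_span ⟨b, hb, rfl⟩) (Ideal.mem_span_singleton_self x)
    exact hmap hxJ
  obtain ⟨c, hcC, hcx⟩ := Ideal.mem_mul_span_singleton.mp hx_mem
  have hc1 : c = 1 := by
    have h0 : (c - 1) * x = 0 := by rw [sub_mul, one_mul, hcx, sub_self]
    rcases mul_eq_zero.mp h0 with h | h
    · exact sub_eq_zero.mp h
    · exact absurd h hx0
  have hbu : ∃ b ∈ T, IsUnit (d b) := by
    by_contra hcon
    push_neg at hcon
    have hCle : Ideal.span ((fun b => d b) '' (T : Set R)) ≤ IsLocalRing.maximalIdeal L := by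
      rw [Ideal.span_le]
      rintro _ ⟨b, hb, rfl⟩
      exact (IsLocalRing.mem_maximalIdeal _).mpr (hcon b hb)
    refine IsLocalRing.maximalIdeal.isMaximal L |>.ne_top ?_
    refine Ideal.eq_top_of_isUnit_mem _ (hCle ?_) isUnit_one
    rw [← hc1]; exact hcC
  obtain ⟨b₀, hb₀T, hb₀u⟩ := hbu
  have hfb₀ : f b₀ = d b₀ * x := hdspec b₀ hb₀T
  have hb₀0 : b₀ ≠ 0 := by
    intro h
    apply hx0
    have : f b₀ = 0 := by rw [h, map_zero]
    rw [hfb₀] at this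
    rcases mul_eq_zero.mp this with h' | h'
    · exact absurd h' hb₀u.ne_zero
    · exact h'
  have hspan : Ideal.map f J = Ideal.span {f b₀} := by
    rw [hx]
    show Ideal.span {x} = Ideal.span {f b₀}
    rw [Ideal.span_singleton_eq_span_singleton]
    exact ⟨hb₀u.unit, by rw [hfb₀]; simp [mul_comm]⟩
  have key : ∀ b ∈ T, ∃ tb : P.primeCompl, (tb : R) * b ∈ Ideal.span {b₀} := by
    intro b hb
    have hfbmem : f b ∈ Ideal.span {f b₀} := by
      rw [← hspan]
      exact Ideal.mem_map_of_mem f (hT ▸ Ideal.subset_span hb)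
    obtain ⟨e, he⟩ := Ideal.mem_span_singleton'.mp hfbmem
    obtain ⟨⟨rb, sb⟩, hmk : IsLocalization.mk' L rb sb = e⟩ := IsLocalization.mk'_surjective P.primeCompl e
    refine ⟨sb, Ideal.mem_span_singleton'.mpr ⟨rb, ?_⟩⟩
    apply hinj
    rw [map_mul, map_mul, ← he, ← hmk]
    calc f rb * f b₀ = (IsLocalization.mk' L rb sb * f sb) * f b₀ := by
          rw [IsLocalization.mk'_spec L rb sb]
      _ = f sb * (IsLocalization.mk' L rb sb * f b₀) := by ring
  choose! t ht using key
  refine ⟨b₀, by rw [← hT]; exact Ideal.subset_span hb₀T, hb₀0, ∏ b ∈ T, t b, ?_⟩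
  have hsb : ∀ b ∈ T, ((∏ b ∈ T, t b : P.primeCompl) : R) * b ∈ Ideal.span {b₀} := by
    intro b hb
    have hcoe : ((∏ b ∈ T, t b : P.primeCompl) : R) = ∏ b' ∈ T, (t b' : R) := by
      push_cast; rfl
    rw [hcoe, ← Finset.mul_prod_erase T _ hb]
    have : (t b : R) * (∏ b' ∈ T.erase b, (t b' : R)) * b
        = (∏ b' ∈ T.erase b, (t b' : R)) * ((t b : R) * b) := by ring
    rw [this]
    exact Ideal.mul_mem_left _ _ (ht b hb)
  intro a ha
  have hcol : J ≤ Submodule.colon (Ideal.span {b₀})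
      (Ideal.span {((∏ b ∈ T, t b : P.primeCompl) : R)}) := by
    rw [← hT, Ideal.span_le]
    intro b hb
    rw [SetLike.mem_coe, Ideal.mem_colon_span_singleton, mul_comm]
    exact hsb b hb
  have := hcol ha
  rw [Ideal.mem_colon_span_singleton] at this
  rwa [mul_comm] at this

end Aux

/-- Let `R` be an almost Dedekind domain with fraction field `K`, and let `I ⊆ J` be
radical ideals.  If `I` is invertible (as a fractional ideal) and
`D(J) = {P ∈ Spec(R) | J ⊄ P}` is quasi-compact in the Zariski topology, then `J`
is invertible. -/
theorem stmt15 {R : Type*} [CommRing R] [IsDomain R] (hR : AlmostDedekind R)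
    (K : Type*) [Field K] [Algebra R K] [IsFractionRing R K]
    (I J : Ideal R) (hIrad : I.IsRadical) (hJrad : J.IsRadical) (hIJ : I ≤ J)
    (hIinv : (I : FractionalIdeal R⁰ K) * (I : FractionalIdeal R⁰ K)⁻¹ = 1)
    (hDJ : IsCompact {P : PrimeSpectrum R | ¬ J ≤ P.asIdeal}) :
    (J : FractionalIdeal R⁰ K) * (J : FractionalIdeal R⁰ K)⁻¹ = 1 := by
  have hinjK : Function.Injective (algebraMap R K) := IsFractionRing.injective R K
  have hI0 : I ≠ ⊥ := by
    rintro rfl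
    rw [FractionalIdeal.coeIdeal_bot, zero_mul] at hIinv
    exact zero_ne_one hIinv
  have hIfg : I.FG := Ideal.fg_of_isUnit hinjK I (IsUnit.of_mul_eq_one _ hIinv)
  have hset : {P : PrimeSpectrum R | ¬ J ≤ P.asIdeal}
      = (PrimeSpectrum.zeroLocus (J : Set R))ᶜ := by
    ext P
    simp [PrimeSpectrum.mem_zeroLocus, SetLike.coe_subset_coe]
  obtain ⟨I₀, hI₀fg, hI₀eq⟩ := PrimeSpectrum.isCompact_isOpen_iff_ideal.mp
    ⟨hDJ, by rw [hset]; exact (PrimeSpectrum.isClosed_zeroLocus _).isOpen_compl⟩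
  rw [hset] at hI₀eq
  have hZL : PrimeSpectrum.zeroLocus (I₀ : Set R) = PrimeSpectrum.zeroLocus (J : Set R) :=
    compl_injective hI₀eq
  have hradeq : I₀.radical = J.radical := by
    rw [← PrimeSpectrum.vanishingIdeal_zeroLocus_eq_radical, hZL,
      PrimeSpectrum.vanishingIdeal_zeroLocus_eq_radical]
  have hJradeq : J.radical = J := le_antisymm hJrad Ideal.le_radical
  have hI₀J : I₀ ≤ J := by
    conv_rhs => rw [← hJradeq]
    rw [← hradeq]
    exact Ideal.le_radical
  have hHJ : I ⊔ I₀ = J := by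
    apply Ideal.eq_of_localization_maximal
    intro P hP
    haveI : P.IsMaximal := hP
    haveI : IsDiscreteValuationRing (Localization.AtPrime P) := hR ⟨P, hP⟩
    by_cases hJP : J ≤ P
    · refine le_antisymm (Ideal.map_mono (sup_le hIJ hI₀J)) ?_
      calc Ideal.map (algebraMap R (Localization.AtPrime P)) J
          ≤ Ideal.map (algebraMap R (Localization.AtPrime P)) I :=
            AlmostDedekind.loc_le P I J hIrad hI0 hIJ hJP
        _ ≤ Ideal.map (algebraMap R (Localization.AtPrime P)) (I ⊔ I₀) :=
            Ideal.map_mono le_sup_left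
    · have hI₀P : ¬ I₀ ≤ P := by
        intro hle
        apply hJP
        have h1 : (⟨P, hP.isPrime⟩ : PrimeSpectrum R) ∈ PrimeSpectrum.zeroLocus (I₀ : Set R) :=
          (PrimeSpectrum.mem_zeroLocus _ _).mpr hle
        rw [hZL] at h1
        exact (PrimeSpectrum.mem_zeroLocus _ _).mp h1
      obtain ⟨tt, htI₀, htP⟩ := SetLike.not_le_iff_exists.mp hI₀P
      have h1 : ∀ (Q : Ideal R), tt ∈ Q →
          Ideal.map (algebraMap R (Localization.AtPrime P)) Q = ⊤ := fun Q hQ =>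
        Ideal.eq_top_of_isUnit_mem _ (Ideal.mem_map_of_mem (algebraMap R (Localization.AtPrime P)) hQ)
          (IsLocalization.map_units (M := P.primeCompl) (Localization.AtPrime P) ⟨tt, htP⟩)
      rw [h1 _ (Ideal.mem_sup_right htI₀), h1 _ (hI₀J htI₀)]
  have hJfg : J.FG := hHJ ▸ Submodule.FG.sup hIfg hI₀fg
  have hJ0 : J ≠ ⊥ := fun h => hI0 (le_bot_iff.mp (h ▸ hIJ))
  by_contra hne
  have hle1 : (J : FractionalIdeal R⁰ K) * (J : FractionalIdeal R⁰ K)⁻¹ ≤ 1 := by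
    rw [FractionalIdeal.inv_eq]
    exact FractionalIdeal.mul_one_div_le_one
  obtain ⟨A, hA⟩ := FractionalIdeal.le_one_iff_exists_coeIdeal.mp hle1
  have hAne : A ≠ ⊤ := by
    rintro rfl
    apply hne
    rw [← hA, FractionalIdeal.coeIdeal_top]
  obtain ⟨P, hPmax, hAP⟩ := A.exists_le_maximal hAne
  haveI := hPmax
  haveI : IsDiscreteValuationRing (Localization.AtPrime P) := hR ⟨P, hPmax⟩
  obtain ⟨b₀, hb₀J, hb₀0, s, hs⟩ := AlmostDedekind.exists_local_gen P J hJfg hJ0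
  set g := algebraMap R K with hg
  have hgb₀ : g b₀ ≠ 0 := fun h => hb₀0 (hinjK (by rw [h, map_zero]))
  set y : K := g s / g b₀ with hy
  have hymem : y ∈ ((J : FractionalIdeal R⁰ K)⁻¹) := by
    rw [FractionalIdeal.mem_inv_iff (FractionalIdeal.coeIdeal_ne_zero.mpr hJ0)]
    intro z hz
    obtain ⟨a, haJ, rfl⟩ := (FractionalIdeal.mem_coeIdeal _).mp hz
    obtain ⟨c, hc⟩ := Ideal.mem_span_singleton'.mp (hs a haJ)
    have heq : y * g a = g c := by
      rw [hy]
      rw [div_mul_eq_mul_div, div_eq_iff hgb₀, ← map_mul, ← map_mul, hc]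
    rw [heq]
    exact (FractionalIdeal.mem_one_iff _).mpr ⟨c, rfl⟩
  have hgs : g (s : R) ∈ (J : FractionalIdeal R⁰ K) * (J : FractionalIdeal R⁰ K)⁻¹ := by
    have hmul := FractionalIdeal.mul_mem_mul
      ((FractionalIdeal.mem_coeIdeal _).mpr ⟨b₀, hb₀J, rfl⟩) hymem
    have heq : g b₀ * y = g (s : R) := by
      rw [hy, mul_div_assoc', mul_comm, mul_div_assoc, div_self hgb₀, mul_one]
    rwa [heq] at hmul
  rw [← hA] at hgs
  obtain ⟨s', hs'A, hs'eq⟩ := (FractionalIdeal.mem_coeIdeal _).mp hgs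
  have : (s : R) ∈ P := hAP (by rwa [hinjK hs'eq] at hs'A)
  exact s.2 this
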